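/- arXiv:1810.11850 — 3 statements merged into one kernel-verified Lean document; each statement's English description precedes it below -/
import Mathlib

section
/- Let T > 0 and H ∈ (0,1) with H ≠ 1/2. Define, for k ≥ 1, c_k := (2/T)·∫₀^T t^(2H)·cos(kπt/T) dt if H < 1/2, and c_k := −(4H(2H−1)T/(kπ)²)·∫₀^T t^(2H−2)·cos(kπt/T) dt if H > 1/2. Then c_k ≤ 0 for all k ≥ 1, and there exists C > 0 such that |c_k| ≤ C·k^(−(2H+1)) for all k ≥ 1. -/
open MeasureTheory Real Filter Set intervalIntegral
open Topology

-- integrability of u^γ sin u on [0,b], γ > -2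
lemma II_sin {γ : ℝ} (hγ : (-2:ℝ) < γ) {b : ℝ} (hb : 0 ≤ b) :
    IntervalIntegrable (fun u : ℝ => u ^ γ * Real.sin u) volume 0 b := by
  have hg : IntervalIntegrable (fun u : ℝ => u ^ (γ+1)) volume 0 b :=
    intervalIntegral.intervalIntegrable_rpow' (by linarith)
  refine hg.mono_fun' ?_ ?_
  · exact ((measurable_id.pow_const γ).mul Real.measurable_sin).aestronglyMeasurable
  · rw [uIoc_of_le hb]
    filter_upwards [ae_restrict_mem measurableSet_Ioc] with x hx
    have hx0 : 0 < x := hx.1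
    have h1 : |Real.sin x| ≤ x := Real.abs_sin_le_abs.trans_eq (abs_of_pos hx0)
    calc ‖x ^ γ * Real.sin x‖ = x ^ γ * |Real.sin x| := by
          rw [norm_mul, Real.norm_eq_abs, Real.norm_eq_abs,
            abs_of_nonneg (Real.rpow_nonneg hx0.le γ)]
      _ ≤ x ^ γ * x := by
          exact mul_le_mul_of_nonneg_left h1 (Real.rpow_nonneg hx0.le γ)
      _ = x ^ (γ+1) := by rw [Real.rpow_add_one hx0.ne']

lemma II_cos {p : ℝ} (hp : (-1:ℝ) < p) {b : ℝ} (hb : 0 ≤ b) :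
    IntervalIntegrable (fun u : ℝ => u ^ p * Real.cos u) volume 0 b := by
  have hg : IntervalIntegrable (fun u : ℝ => u ^ p) volume 0 b :=
    intervalIntegral.intervalIntegrable_rpow' hp
  refine hg.mono_fun' ?_ ?_
  · exact ((measurable_id.pow_const p).mul Real.measurable_cos).aestronglyMeasurable
  · rw [uIoc_of_le hb]
    filter_upwards [ae_restrict_mem measurableSet_Ioc] with x hx
    calc ‖x ^ p * Real.cos x‖ = x ^ p * |Real.cos x| := by
          rw [norm_mul, Real.norm_eq_abs, Real.norm_eq_abs,
            abs_of_nonneg (Real.rpow_nonneg hx.1.le p)]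
      _ ≤ x ^ p * 1 := mul_le_mul_of_nonneg_left (Real.abs_cos_le_one x) (Real.rpow_nonneg hx.1.le p)
      _ = x ^ p := mul_one _

-- partial sums of alternating series
lemma alt_sum_bounds (a : ℕ → ℝ) (h0 : ∀ n, 0 ≤ a n) (hm : ∀ n, a (n+1) ≤ a n) (k : ℕ) :
    0 ≤ (∑ j ∈ Finset.range k, (-1 : ℝ) ^ j * a j) ∧
    (∑ j ∈ Finset.range k, (-1 : ℝ) ^ j * a j) ≤ a 0 := by
  have key : ∀ k : ℕ, (0 ≤ (∑ j ∈ Finset.range k, (-1 : ℝ) ^ j * a j) ∧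
      (∑ j ∈ Finset.range k, (-1 : ℝ) ^ j * a j) ≤ a 0) ∧
      (if Even k then (∑ j ∈ Finset.range k, (-1 : ℝ) ^ j * a j) ≤ a 0 - a k
       else a k ≤ (∑ j ∈ Finset.range k, (-1 : ℝ) ^ j * a j)) := by
    intro k
    induction k with
    | zero => simp [h0 0]
    | succ n ih =>
      rcases Nat.even_or_odd n with he | ho
      · have h1 := ih.2
        rw [if_pos he] at h1
        have hs : (∑ j ∈ Finset.range (n+1), (-1 : ℝ) ^ j * a j)
            = (∑ j ∈ Finset.range n, (-1 : ℝ) ^ j * a j) + a n := by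
          rw [Finset.sum_range_succ, he.neg_one_pow, one_mul]
        have hmono : a (n+1) ≤ a n := hm n
        constructor
        · constructor
          · rw [hs]; have := ih.1.1; linarith [h0 n]
          · rw [hs]; linarith
        · rw [if_neg (by simp [Nat.even_add_one, he])]
          rw [hs]; linarith [ih.1.1]
      · have h1 := ih.2
        rw [if_neg (by simp [Nat.not_even_iff_odd.mpr ho])] at h1
        have hs : (∑ j ∈ Finset.range (n+1), (-1 : ℝ) ^ j * a j)
            = (∑ j ∈ Finset.range n, (-1 : ℝ) ^ j * a j) - a n := by
          rw [Finset.sum_range_succ, ho.neg_one_pow]; ring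
        have hmono : a (n+1) ≤ a n := hm n
        constructor
        · exact ⟨by rw [hs]; linarith, by rw [hs]; linarith [ih.1.2, h0 n]⟩
        · rw [if_pos (by simpa [Nat.even_add_one] using Nat.not_even_iff_odd.mpr ho)]
          rw [hs]; linarith
  exact (key k).1

lemma piece_int {γ : ℝ} (hγ : (-2:ℝ) < γ) (j : ℕ) :
    IntervalIntegrable (fun u : ℝ => u ^ γ * Real.sin u) volume (j*π) ((j+1)*π) :=
  (II_sin hγ (by positivity)).symm.trans (II_sin hγ (by positivity))

lemma sin_integral_bounds {γ : ℝ} (hγ₁ : (-2:ℝ) < γ) (hγ₂ : γ < 0) (k : ℕ) :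
    0 ≤ (∫ u in (0:ℝ)..(k*π), u ^ γ * Real.sin u) ∧
    (∫ u in (0:ℝ)..(k*π), u ^ γ * Real.sin u) ≤ π ^ (γ+2) / (γ+2) := by
  set a : ℕ → ℝ := fun j => ∫ v in (0:ℝ)..π, (v + j*π) ^ γ * Real.sin v with ha
  have int_a : ∀ j : ℕ, IntervalIntegrable (fun v : ℝ => (v + j*π) ^ γ * Real.sin v)
      volume 0 π := by
    intro j
    have h := (piece_int hγ₁ j).comp_add_right ((j:ℝ)*π)
    have e1 : (j:ℝ)*π - j*π = 0 := by ring
    have e2 : ((j:ℝ)+1)*π - j*π = π := by ring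
    rw [e1, e2] at h
    have heq : (fun v : ℝ => (v + (j:ℝ)*π) ^ γ * Real.sin v)
        = fun v : ℝ => (-1:ℝ)^j * ((v + (j:ℝ)*π) ^ γ * Real.sin (v + (j:ℝ)*π)) := by
      funext v
      have hj : (-1:ℝ)^j * (-1:ℝ)^j = 1 := by
        rw [← pow_add]; exact Even.neg_one_pow ⟨j, rfl⟩
      rw [Real.sin_add_nat_mul_pi,
        show ((-1:ℝ)^j * ((v + (j:ℝ)*π) ^ γ * ((-1:ℝ)^j * Real.sin v)))
          = ((v + (j:ℝ)*π) ^ γ * Real.sin v) * ((-1:ℝ)^j * (-1:ℝ)^j) from by ring,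
        hj, mul_one]
    rw [heq]
    exact h.const_mul _
  have h0 : ∀ j, 0 ≤ a j := by
    intro j
    refine intervalIntegral.integral_nonneg Real.pi_pos.le fun v hv => ?_
    exact mul_nonneg (Real.rpow_nonneg (add_nonneg hv.1 (by positivity)) _)
      (Real.sin_nonneg_of_nonneg_of_le_pi hv.1 hv.2)
  have hm : ∀ j, a (j+1) ≤ a j := by
    intro j
    refine intervalIntegral.integral_mono_on Real.pi_pos.le ?_ (int_a j) fun v hv => ?_
    · have h := int_a (j+1); push_cast at h ⊢; exact h
    rcases eq_or_lt_of_le hv.1 with h | h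
    · simp [← h]
    · have hsin : 0 ≤ Real.sin v := Real.sin_nonneg_of_nonneg_of_le_pi hv.1 hv.2
      have hbase : (v + (j:ℝ)*π) ≤ v + ((j:ℕ)+1:ℕ)*π := by
        push_cast; nlinarith [Real.pi_pos]
      have hpos : (0:ℝ) < v + j*π := by positivity
      refine mul_le_mul_of_nonneg_right ?_ hsin
      exact Real.rpow_le_rpow_of_nonpos hpos hbase hγ₂.le
  have translate : ∀ j : ℕ, (∫ u in ((j:ℝ)*π)..(((j:ℝ)+1)*π), u ^ γ * Real.sin u)
      = (-1:ℝ)^j * a j := by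
    intro j
    have h := intervalIntegral.integral_comp_add_right (a := (0:ℝ)) (b := π)
      (fun u => u ^ γ * Real.sin u) ((j:ℝ)*π)
    rw [zero_add] at h
    have e2 : π + (j:ℝ)*π = ((j:ℝ)+1)*π := by ring
    rw [e2] at h
    rw [← h, ha]
    rw [← intervalIntegral.integral_const_mul]
    refine intervalIntegral.integral_congr fun v _ => ?_
    simp only [Real.sin_add_nat_mul_pi]
    ring
  have hsum := intervalIntegral.sum_integral_adjacent_intervals
    (a := fun i : ℕ => (i:ℝ)*π) (μ := volume)
    (f := fun u : ℝ => u ^ γ * Real.sin u) (n := k)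
    (fun i _ => by simpa using piece_int hγ₁ i)
  simp only [Nat.cast_zero, zero_mul] at hsum
  have hsum2 : (∫ u in (0:ℝ)..(k*π), u ^ γ * Real.sin u)
      = ∑ j ∈ Finset.range k, (-1:ℝ)^j * a j := by
    rw [← hsum]
    refine Finset.sum_congr rfl fun j _ => ?_
    rw [← translate j]; push_cast; ring_nf
  have hb := alt_sum_bounds a h0 hm k
  have ha0 : a 0 ≤ π ^ (γ+2) / (γ+2) := by
    have e : a 0 = ∫ v in (0:ℝ)..π, v ^ γ * Real.sin v := by
      rw [ha]; simp
    have hle : a 0 ≤ ∫ v in (0:ℝ)..π, v ^ (γ+1) := by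
      rw [e]
      refine intervalIntegral.integral_mono_on Real.pi_pos.le (II_sin hγ₁ Real.pi_pos.le)
        (intervalIntegral.intervalIntegrable_rpow' (by linarith)) fun v hv => ?_
      rcases eq_or_lt_of_le hv.1 with h | h
      · rw [← h]; simpa using Real.rpow_nonneg (le_refl (0:ℝ)) (γ+1)
      · calc v ^ γ * Real.sin v ≤ v ^ γ * v :=
            mul_le_mul_of_nonneg_left (Real.sin_le h.le) (Real.rpow_nonneg h.le _)
          _ = v ^ (γ+1) := by rw [Real.rpow_add_one h.ne']
    have := integral_rpow (a := (0:ℝ)) (b := π) (r := γ+1) (Or.inl (by linarith))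
    rw [this] at hle
    rw [Real.zero_rpow (by linarith : γ + 1 + 1 ≠ 0)] at hle
    have e3 : γ + 1 + 1 = γ + 2 := by ring
    rw [e3, sub_zero] at hle
    exact hle
  rw [hsum2]
  exact ⟨hb.1, hb.2.trans ha0⟩

lemma ibp_cos_sin {p : ℝ} (hp : (-1:ℝ) < p) {b : ℝ} (hb : 0 < b) :
    (∫ u in (0:ℝ)..b, u ^ p * Real.cos u)
      = b ^ p * Real.sin b - p * ∫ u in (0:ℝ)..b, u ^ (p-1) * Real.sin u := by
  have hint1 : IntervalIntegrable (fun u : ℝ => u ^ (p-1) * Real.sin u) volume 0 b :=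
    II_sin (by linarith) hb.le
  have hint2 := II_cos hp hb.le
  have hint : IntervalIntegrable
      (fun u : ℝ => p * (u ^ (p-1) * Real.sin u) + u ^ p * Real.cos u) volume 0 b :=
    (hint1.const_mul p).add hint2
  have hderiv : ∀ x ∈ Ioo (0:ℝ) b, HasDerivAt (fun u : ℝ => u ^ p * Real.sin u)
      (p * (x ^ (p-1) * Real.sin x) + x ^ p * Real.cos x) x := by
    intro x hx
    have h1 : HasDerivAt (fun u : ℝ => u ^ p) (p * x ^ (p-1)) x :=
      Real.hasDerivAt_rpow_const (Or.inl hx.1.ne')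
    have h2 : HasDerivAt (fun u : ℝ => u ^ p * Real.sin u)
        (p * x ^ (p-1) * Real.sin x + x ^ p * Real.cos x) x := h1.mul (Real.hasDerivAt_sin x)
    convert h2 using 1
    ring
  have htend0 : Tendsto (fun u : ℝ => u ^ p * Real.sin u) (𝓝[>] 0) (𝓝 0) := by
    apply squeeze_zero_norm' (a := fun u : ℝ => u ^ (p+1))
    · filter_upwards [self_mem_nhdsWithin] with x (hx : 0 < x)
      calc ‖x ^ p * Real.sin x‖ = x ^ p * |Real.sin x| := by
            rw [norm_mul, Real.norm_eq_abs, Real.norm_eq_abs,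
              abs_of_nonneg (Real.rpow_nonneg hx.le p)]
        _ ≤ x ^ p * x := mul_le_mul_of_nonneg_left
            (Real.abs_sin_le_abs.trans_eq (abs_of_pos hx)) (Real.rpow_nonneg hx.le p)
        _ = x ^ (p+1) := by rw [Real.rpow_add_one hx.ne']
    · have hc := Real.continuousAt_rpow_const 0 (p+1) (Or.inr (by linarith))
      have := hc.tendsto
      rw [Real.zero_rpow (by linarith : p + 1 ≠ 0)] at this
      exact this.mono_left nhdsWithin_le_nhds
  have htendb : Tendsto (fun u : ℝ => u ^ p * Real.sin u) (𝓝[<] b) (𝓝 (b ^ p * Real.sin b)) := by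
    have hc : ContinuousAt (fun u : ℝ => u ^ p * Real.sin u) b :=
      ((Real.continuousAt_rpow_const b p (Or.inl hb.ne')).mul Real.continuous_sin.continuousAt)
    exact hc.continuousWithinAt
  have key := intervalIntegral.integral_eq_sub_of_hasDerivAt_of_tendsto hb hderiv hint htend0 htendb
  rw [intervalIntegral.integral_add (hint1.const_mul p) hint2,
    intervalIntegral.integral_const_mul] at key
  linarith

lemma subst_lemma {p : ℝ} (hp : p ≠ 0) {T : ℝ} (hT : 0 < T) {k : ℕ} (hk : 0 < k) :
    (∫ t in (0:ℝ)..T, t ^ p * Real.cos ((k:ℝ) * π * t / T))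
      = ((k:ℝ)*π/T) ^ (-(p+1)) * ∫ u in (0:ℝ)..((k:ℝ)*π), u ^ p * Real.cos u := by
  have hk0 : (0:ℝ) < (k:ℝ) := by exact_mod_cast hk
  have hs : (0:ℝ) < (k:ℝ)*π/T := by positivity
  set s : ℝ := (k:ℝ)*π/T with hsdef
  have hcancel : s ^ (-p) * s ^ p = 1 := by
    rw [← Real.rpow_add hs]; simp
  have step1 : (∫ t in (0:ℝ)..T, t ^ p * Real.cos ((k:ℝ) * π * t / T))
      = ∫ t in (0:ℝ)..T, s ^ (-p) * ((t * s) ^ p * Real.cos (t * s)) := by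
    refine intervalIntegral.integral_congr fun t ht => ?_
    rw [uIcc_of_le hT.le] at ht
    have harg : (k:ℝ) * π * t / T = t * s := by
      rw [hsdef]; field_simp
    rw [harg, Real.mul_rpow ht.1 hs.le,
      show s ^ (-p) * (t ^ p * s ^ p * Real.cos (t * s))
        = (s ^ (-p) * s ^ p) * (t ^ p * Real.cos (t * s)) from by ring,
      hcancel, one_mul]
  rw [step1, intervalIntegral.integral_const_mul,
    intervalIntegral.integral_comp_mul_right (fun u => u ^ p * Real.cos u) hs.ne']
  have hTs : T * s = (k:ℝ) * π := by
    rw [hsdef]; field_simp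
  rw [zero_mul, hTs, smul_eq_mul, ← mul_assoc]
  congr 1
  rw [← Real.rpow_neg_one s, ← Real.rpow_add hs]
  ring_nf

lemma cos_integral_key {p : ℝ} (hp1 : (-1:ℝ) < p) (hp2 : p < 1) {k : ℕ} (hk : 0 < k) :
    ∃ S : ℝ, (∫ u in (0:ℝ)..((k:ℝ)*π), u ^ p * Real.cos u) = -p * S ∧ 0 ≤ S ∧
      S ≤ π ^ (p+1) / (p+1) := by
  have hk0 : (0:ℝ) < (k:ℝ) := by exact_mod_cast hk
  have hkπ : (0:ℝ) < (k:ℝ)*π := mul_pos hk0 Real.pi_pos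
  refine ⟨∫ u in (0:ℝ)..((k:ℝ)*π), u ^ (p-1) * Real.sin u, ?_, ?_, ?_⟩
  · rw [ibp_cos_sin hp1 hkπ, Real.sin_nat_mul_pi]
    ring
  · exact (sin_integral_bounds (by linarith) (by linarith) k).1
  · have h := (sin_integral_bounds (γ := p-1) (by linarith) (by linarith) k).2
    have e : p - 1 + 2 = p + 1 := by ring
    rwa [e] at h

/-- for `H ∈ (0, 1)`, `H ≠ 1/2`, the coefficients
`c_k = (2/T) ∫₀ᵀ t^{2H} cos(kπt/T) dt` (for `H < 1/2`) and
`c_k = −(4H(2H−1)T/(kπ)²) ∫₀ᵀ t^{2H−2} cos(kπt/T) dt` (for `H > 1/2`) are nonpositive and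
satisfy `|c_k| ≤ C k^{−(2H+1)}`. -/
theorem fbm_fourier_coefficients_sign_and_decay
    (T H : ℝ) (hT : 0 < T) (hH : H ∈ Set.Ioo (0 : ℝ) 1) (hH' : H ≠ 1 / 2)
    (c : ℕ → ℝ)
    (hc : ∀ k : ℕ, 1 ≤ k →
      c k = if H < 1 / 2 then
          (2 / T) * ∫ t in (0 : ℝ)..T, t ^ (2 * H) * Real.cos (k * π * t / T)
        else
          -(4 * H * (2 * H - 1) * T / (k * π) ^ 2) *
            ∫ t in (0 : ℝ)..T, t ^ (2 * H - 2) * Real.cos (k * π * t / T)) :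
    (∀ k : ℕ, 1 ≤ k → c k ≤ 0) ∧
    ∃ C > (0 : ℝ), ∀ k : ℕ, 1 ≤ k → |c k| ≤ C * (k : ℝ) ^ (-(2 * H + 1)) := by
  obtain ⟨hH0, hH1⟩ := hH
  by_cases hlt : H < 1/2
  · -- case H < 1/2
    set A : ℝ := π ^ (2*H+1) / (2*H+1) with hA
    have hApos : 0 < A := div_pos (Real.rpow_pos_of_pos Real.pi_pos _) (by linarith)
    set K : ℝ := 2/T * (π/T) ^ (-(2*H+1)) * (2*H) with hK
    have hKpos : 0 < K := by
      apply mul_pos (mul_pos (by positivity) (Real.rpow_pos_of_pos (by positivity) _))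
      linarith
    have key : ∀ k : ℕ, 1 ≤ k → c k ≤ 0 ∧ |c k| ≤ (K * A) * (k:ℝ) ^ (-(2*H+1)) := by
      intro k hk
      have hk0 : (0:ℝ) < (k:ℝ) := by exact_mod_cast hk
      have hck : c k = (2/T) * ∫ t in (0:ℝ)..T, t ^ (2*H) * Real.cos ((k:ℝ)*π*t/T) := by
        rw [hc k hk, if_pos hlt]
      have hsub := subst_lemma (p := 2*H) (by linarith) hT (k := k) (by omega)
      obtain ⟨S, hJ, hS0, hSA⟩ := cos_integral_key (p := 2*H) (by linarith) (by linarith)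
        (k := k) (by omega)
      have hXpos : (0:ℝ) < ((k:ℝ)*π/T) ^ (-(2*H+1)) :=
        Real.rpow_pos_of_pos (by positivity) _
      have hsign : c k ≤ 0 := by
        rw [hck, hsub, hJ]
        have h3 : 0 ≤ (2/T) * (((k:ℝ)*π/T) ^ (-(2*H+1)) * (2*H*S)) :=
          mul_nonneg (by positivity) (mul_nonneg hXpos.le
            (mul_nonneg (by linarith) hS0))
        nlinarith
      have hX : ((k:ℝ)*π/T) ^ (-(2*H+1)) = (k:ℝ) ^ (-(2*H+1)) * (π/T) ^ (-(2*H+1)) := by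
        rw [show (k:ℝ)*π/T = (k:ℝ) * (π/T) from by ring,
          Real.mul_rpow hk0.le (by positivity)]
      have habs : |c k| = (K * S) * (k:ℝ) ^ (-(2*H+1)) := by
        rw [abs_of_nonpos hsign, hck, hsub, hJ, hX, hK]
        ring
      refine ⟨hsign, ?_⟩
      rw [habs]
      have h1 : K * S ≤ K * A := mul_le_mul_of_nonneg_left hSA hKpos.le
      exact mul_le_mul_of_nonneg_right h1 (Real.rpow_nonneg hk0.le _)
    exact ⟨fun k hk => (key k hk).1,
      ⟨K * A, mul_pos hKpos hApos, fun k hk => (key k hk).2⟩⟩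
  · -- case H > 1/2
    have hgt : 1/2 < H := lt_of_le_of_ne (not_lt.mp hlt) (Ne.symm hH')
    set A : ℝ := π ^ (2*H-2+1) / (2*H-2+1) with hA
    have hApos : 0 < A := div_pos (Real.rpow_pos_of_pos Real.pi_pos _) (by linarith)
    set K : ℝ := 4*H*(2*H-1)*T * (2-2*H) * (π/T) ^ (-(2*H-2+1)) / π^2 with hK
    have h1 : 0 < 4*H*(2*H-1)*T :=
      mul_pos (mul_pos (by linarith) (by linarith)) hT
    have hKpos : 0 < K := by
      have h2 : (0:ℝ) < 2-2*H := by linarith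
      have h3 : 0 < (π/T) ^ (-(2*H-2+1)) := Real.rpow_pos_of_pos (by positivity) _
      exact div_pos (mul_pos (mul_pos h1 h2) h3) (by positivity)
    have key : ∀ k : ℕ, 1 ≤ k → c k ≤ 0 ∧ |c k| ≤ (K * A) * (k:ℝ) ^ (-(2*H+1)) := by
      intro k hk
      have hk0 : (0:ℝ) < (k:ℝ) := by exact_mod_cast hk
      have hck : c k = -(4*H*(2*H-1)*T/((k:ℝ)*π)^2) *
          ∫ t in (0:ℝ)..T, t ^ (2*H-2) * Real.cos ((k:ℝ)*π*t/T) := by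
        rw [hc k hk, if_neg hlt]
      have hsub := subst_lemma (p := 2*H-2) (by intro h; nlinarith) hT (k := k) (by omega)
      obtain ⟨S, hJ, hS0, hSA⟩ := cos_integral_key (p := 2*H-2) (by linarith) (by linarith)
        (k := k) (by omega)
      have hXpos : (0:ℝ) < ((k:ℝ)*π/T) ^ (-(2*H-2+1)) :=
        Real.rpow_pos_of_pos (by positivity) _
      have hcoef : (0:ℝ) < 4*H*(2*H-1)*T/((k:ℝ)*π)^2 :=
        div_pos h1 (pow_pos (mul_pos hk0 Real.pi_pos) 2)
      have hsign : c k ≤ 0 := by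
        rw [hck, hsub, hJ]
        have h3 : 0 ≤ (4*H*(2*H-1)*T/((k:ℝ)*π)^2) *
            (((k:ℝ)*π/T) ^ (-(2*H-2+1)) * ((-(2*H-2))*S)) :=
          mul_nonneg hcoef.le (mul_nonneg hXpos.le
            (mul_nonneg (by linarith) hS0))
        nlinarith
      have hX : ((k:ℝ)*π/T) ^ (-(2*H-2+1))
          = (k:ℝ) ^ (-(2*H-2+1)) * (π/T) ^ (-(2*H-2+1)) := by
        rw [show (k:ℝ)*π/T = (k:ℝ) * (π/T) from by ring,
          Real.mul_rpow hk0.le (by positivity)]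
      have hkk : ((k:ℝ)^2)⁻¹ * (k:ℝ) ^ (-(2*H-2+1)) = (k:ℝ) ^ (-(2*H+1)) := by
        have h2 : ((k:ℝ)^2)⁻¹ = (k:ℝ) ^ (-2:ℝ) := by
          rw [Real.rpow_neg hk0.le,
            show ((2:ℝ)) = ((2:ℕ):ℝ) from by norm_num, Real.rpow_natCast]
        rw [h2, ← Real.rpow_add hk0]
        congr 1
        ring
      have habs : |c k| = (K * S) * (k:ℝ) ^ (-(2*H+1)) := by
        rw [abs_of_nonpos hsign, hck, hsub, hJ, hX, ← hkk, hK]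
        ring
      refine ⟨hsign, ?_⟩
      rw [habs]
      have hle : K * S ≤ K * A := mul_le_mul_of_nonneg_left hSA hKpos.le
      exact mul_le_mul_of_nonneg_right hle (Real.rpow_nonneg hk0.le _)
    exact ⟨fun k hk => (key k hk).1,
      ⟨K * A, mul_pos hKpos hApos, fun k hk => (key k hk).2⟩⟩
end

section
/- Let T > 0. Then for all s, t ∈ [0,T], the series Σ_{k=1}^∞ (2T/((k − 1/2)²·π²))·sin((k − 1/2)πt/T)·sin((k − 1/2)πs/T) converges and equals min(s, t). -/
open Real

private lemma bern2_eval (x : ℝ) :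
    (Polynomial.map (algebraMap ℚ ℝ) (Polynomial.bernoulli 2)).eval x = x ^ 2 - x + 1 / 6 := by
  have h2 : _root_.bernoulli 2 = 1 / 6 := by
    rw [bernoulli_eq_bernoulli'_of_ne_one (by norm_num), bernoulli'_two]
  simp [Polynomial.bernoulli, Finset.sum_range_succ, bernoulli_one, h2]
  ring

private lemma cos_sum (x : ℝ) (hx : x ∈ Set.Icc (0 : ℝ) 1) :
    HasSum (fun n : ℕ => Real.cos (2 * π * n * x) / (n : ℝ) ^ 2)
      (π ^ 2 * (x ^ 2 - x + 1 / 6)) := by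
  have := hasSum_one_div_nat_pow_mul_cos (k := 1) one_ne_zero hx
  simp only [mul_one, bern2_eval] at this
  convert this using 2 with n
  · rw [one_div, inv_mul_eq_div]
  · simp [Nat.factorial]
    ring

/-- Sum of cos((2k+1)y)/(2k+1)^2 for |y| ≤ π. -/
private lemma odd_cos_sum (y : ℝ) (hy : |y| ≤ π) :
    HasSum (fun k : ℕ => Real.cos ((2 * (k : ℝ) + 1) * y) / (2 * (k : ℝ) + 1) ^ 2)
      (π ^ 2 / 8 - π * |y| / 4) := by
  wlog hy0 : 0 ≤ y generalizing y
  · have h := this (-y) (by rwa [abs_neg]) (by linarith [not_le.mp hy0])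
    rw [abs_neg] at h
    have heq : (fun k : ℕ => Real.cos ((2 * (k : ℝ) + 1) * y) / (2 * (k : ℝ) + 1) ^ 2)
        = (fun k : ℕ => Real.cos ((2 * (k : ℝ) + 1) * (-y)) / (2 * (k : ℝ) + 1) ^ 2) := by
      funext k
      rw [mul_neg, Real.cos_neg]
    rw [heq]
    exact h
  rw [abs_of_nonneg hy0] at hy ⊢
  have hπ := Real.pi_pos
  have hA : HasSum (fun n : ℕ => Real.cos ((n : ℝ) * y) / (n : ℝ) ^ 2)
      (π ^ 2 * ((y / (2 * π)) ^ 2 - y / (2 * π) + 1 / 6)) := by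
    have h := cos_sum (y / (2 * π)) ⟨by positivity, by
      rw [div_le_one (by positivity)]; linarith⟩
    have heq : (fun n : ℕ => Real.cos ((n : ℝ) * y) / (n : ℝ) ^ 2)
        = (fun n : ℕ => Real.cos (2 * π * n * (y / (2 * π))) / (n : ℝ) ^ 2) := by
      funext n
      congr 2
      field_simp
    rw [heq]
    exact h
  have hB : HasSum (fun n : ℕ => Real.cos (2 * (n : ℝ) * y) / (n : ℝ) ^ 2)
      (π ^ 2 * ((y / π) ^ 2 - y / π + 1 / 6)) := by
    have h := cos_sum (y / π) ⟨by positivity, by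
      rw [div_le_one hπ]; linarith⟩
    have heq : (fun n : ℕ => Real.cos (2 * (n : ℝ) * y) / (n : ℝ) ^ 2)
        = (fun n : ℕ => Real.cos (2 * π * n * (y / π)) / (n : ℝ) ^ 2) := by
      funext n
      congr 2
      field_simp
    rw [heq]
    exact h
  have hEven : HasSum
      (fun k : ℕ => Real.cos (((2 * k : ℕ) : ℝ) * y) / ((2 * k : ℕ) : ℝ) ^ 2)
      (π ^ 2 * ((y / π) ^ 2 - y / π + 1 / 6) / 4) := by
    have h := hB.div_const 4
    have heq : (fun k : ℕ => Real.cos (((2 * k : ℕ) : ℝ) * y) / ((2 * k : ℕ) : ℝ) ^ 2)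
        = (fun k : ℕ => Real.cos (2 * (k : ℝ) * y) / (k : ℝ) ^ 2 / 4) := by
      funext k
      push_cast
      rw [div_div]
      congr 1
      ring
    rw [heq]
    exact h
  have hOddSummable : Summable
      (fun k : ℕ => Real.cos (((2 * k + 1 : ℕ) : ℝ) * y) / ((2 * k + 1 : ℕ) : ℝ) ^ 2) :=
    hA.summable.comp_injective (i := fun k : ℕ => 2 * k + 1)
      (fun a b h => by simpa using h)
  obtain ⟨c, hc⟩ := hOddSummable
  have huniq := (HasSum.even_add_odd
      (f := fun n : ℕ => Real.cos ((n : ℝ) * y) / (n : ℝ) ^ 2) hEven hc).unique hA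
  have hcval : c = π ^ 2 / 8 - π * y / 4 := by
    have hc' : c = π ^ 2 * ((y / (2 * π)) ^ 2 - y / (2 * π) + 1 / 6)
        - π ^ 2 * ((y / π) ^ 2 - y / π + 1 / 6) / 4 := by linarith
    rw [hc']
    field_simp
    ring
  rw [← hcval]
  have heq : (fun k : ℕ => Real.cos ((2 * (k : ℝ) + 1) * y) / (2 * (k : ℝ) + 1) ^ 2)
      = (fun k : ℕ => Real.cos (((2 * k + 1 : ℕ) : ℝ) * y) / ((2 * k + 1 : ℕ) : ℝ) ^ 2) := by
    funext k
    push_cast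
    ring_nf
  rw [heq]
  exact hc

/-- for all `s, t ∈ [0, T]`, the series
`∑_{k ≥ 1} (2T/((k − 1/2)² π²)) sin((k − 1/2)πt/T) sin((k − 1/2)πs/T)` converges and its sum is
`min(s, t)` (the covariance of Brownian motion). -/
theorem brownian_motion_kl_series (T : ℝ) (hT : 0 < T) :
    ∀ s ∈ Set.Icc (0 : ℝ) T, ∀ t ∈ Set.Icc (0 : ℝ) T,
      Summable (fun k : ℕ =>
        (2 * T / ((((k : ℝ) + 1) - 1 / 2) ^ 2 * π ^ 2)) *
          Real.sin ((((k : ℝ) + 1) - 1 / 2) * π * t / T) *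
          Real.sin ((((k : ℝ) + 1) - 1 / 2) * π * s / T)) ∧
      (∑' k : ℕ,
        (2 * T / ((((k : ℝ) + 1) - 1 / 2) ^ 2 * π ^ 2)) *
          Real.sin ((((k : ℝ) + 1) - 1 / 2) * π * t / T) *
          Real.sin ((((k : ℝ) + 1) - 1 / 2) * π * s / T)) = min s t := by
  intro s hs t ht
  obtain ⟨hs0, hsT⟩ := hs
  obtain ⟨ht0, htT⟩ := ht
  have hπ := Real.pi_pos
  set y₁ : ℝ := π * (t - s) / (2 * T) with hy₁def
  set y₂ : ℝ := π * (t + s) / (2 * T) with hy₂def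
  have hy₁ : |y₁| ≤ π := by
    rw [hy₁def, abs_div, abs_mul, abs_of_nonneg hπ.le, abs_of_nonneg (by linarith : (0:ℝ) ≤ 2*T),
      div_le_iff₀ (by linarith)]
    have : |t - s| ≤ T := abs_sub_le_iff.mpr ⟨by linarith, by linarith⟩
    nlinarith
  have hy₂0 : 0 ≤ y₂ := by
    rw [hy₂def]
    positivity
  have hy₂ : |y₂| ≤ π := by
    rw [abs_of_nonneg hy₂0, hy₂def, div_le_iff₀ (by linarith)]
    nlinarith
  have h1 := odd_cos_sum y₁ hy₁
  have h2 := odd_cos_sum y₂ hy₂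
  have h := (h1.sub h2).mul_left (4 * T / π ^ 2)
  have prod : ∀ a b : ℝ, Real.sin a * Real.sin b =
      (Real.cos (a - b) - Real.cos (a + b)) / 2 := by
    intro a b
    rw [Real.cos_sub, Real.cos_add]
    ring
  have heq : (fun k : ℕ =>
        (2 * T / ((((k : ℝ) + 1) - 1 / 2) ^ 2 * π ^ 2)) *
          Real.sin ((((k : ℝ) + 1) - 1 / 2) * π * t / T) *
          Real.sin ((((k : ℝ) + 1) - 1 / 2) * π * s / T)) =
      (fun k : ℕ => 4 * T / π ^ 2 *
        (Real.cos ((2 * (k : ℝ) + 1) * y₁) / (2 * (k : ℝ) + 1) ^ 2 -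
         Real.cos ((2 * (k : ℝ) + 1) * y₂) / (2 * (k : ℝ) + 1) ^ 2)) := by
    funext k
    rw [mul_assoc, prod]
    have e1 : (((k : ℝ) + 1) - 1 / 2) * π * t / T - (((k : ℝ) + 1) - 1 / 2) * π * s / T
        = (2 * (k : ℝ) + 1) * y₁ := by
      rw [hy₁def]
      field_simp
      ring
    have e2 : (((k : ℝ) + 1) - 1 / 2) * π * t / T + (((k : ℝ) + 1) - 1 / 2) * π * s / T
        = (2 * (k : ℝ) + 1) * y₂ := by
      rw [hy₂def]
      field_simp
      ring
    rw [e1, e2, ← sub_div]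
    have hk : (2 * (k : ℝ) + 1) ≠ 0 := by positivity
    have hk2 : (((k : ℝ) + 1) - 1 / 2) ≠ 0 := by
      have : (0:ℝ) ≤ (k:ℝ) := Nat.cast_nonneg k
      intro hcon; nlinarith
    have key : ∀ C : ℝ, 2 * T / ((((k : ℝ) + 1) - 1 / 2) ^ 2 * π ^ 2) * (C / 2)
        = 4 * T / π ^ 2 * (C / (2 * (k : ℝ) + 1) ^ 2) := by
      intro C
      rw [div_mul_div_comm, div_mul_div_comm]
      rw [div_eq_div_iff
        (mul_ne_zero (mul_ne_zero (pow_ne_zero 2 hk2) (pow_ne_zero 2 Real.pi_ne_zero)) two_ne_zero)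
        (mul_ne_zero (pow_ne_zero 2 Real.pi_ne_zero) (pow_ne_zero 2 hk))]
      ring
    exact key _
  rw [heq]
  refine ⟨h.summable, ?_⟩
  rw [h.tsum_eq]
  have habs1 : |y₁| = π * |t - s| / (2 * T) := by
    rw [hy₁def, abs_div, abs_mul, abs_of_nonneg hπ.le,
      abs_of_nonneg (by linarith : (0:ℝ) ≤ 2*T)]
  rw [abs_of_nonneg hy₂0, habs1, hy₂def]
  rcases le_total s t with hst | hst
  · rw [abs_of_nonneg (by linarith), min_eq_left hst]
    field_simp
    ring
  · rw [abs_of_nonpos (by linarith), min_eq_right hst]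
    field_simp
    ring
end

section
/- Let T > 0 and H ∈ (0,1/2). Then for every integer k ≥ 1, ∫₀^T e^(−t^(2H))·cos(kπt/T) dt ≥ 0. -/
open Real MeasureTheory Finset


lemma alt_sum_aux : ∀ (k : ℕ) (d : ℕ → ℝ), (∀ j, j + 1 < k → d (j+1) ≤ d j) →
    (∀ j, j < k → 0 ≤ d j) →
    0 ≤ ∑ j ∈ range k, (-1:ℝ)^j * d j ∧
      ∑ j ∈ range k, (-1:ℝ)^j * d j ≤ (if k = 0 then 0 else d 0) := by
  intro k
  induction k with
  | zero => intro d _ _; simp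
  | succ n ih =>
    intro d hmono hpos
    have hsum : ∑ j ∈ range (n+1), (-1:ℝ)^j * d j
        = d 0 - ∑ j ∈ range n, (-1:ℝ)^j * d (j+1) := by
      rw [Finset.sum_range_succ' (fun j => (-1:ℝ)^j * d j) n]
      have : ∀ j, (-1:ℝ)^(j+1) * d (j+1) = -((-1:ℝ)^j * d (j+1)) := by
        intro j; ring
      simp only [this, Finset.sum_neg_distrib]
      ring
    have ih' := ih (fun j => d (j+1)) (fun j hj => hmono (j+1) (by omega))
      (fun j hj => hpos (j+1) (by omega))
    have h0 : 0 ≤ d 0 := hpos 0 (by omega)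
    constructor
    · rw [hsum]
      rcases Nat.eq_zero_or_pos n with rfl | hn
      · simpa using h0
      · have h1 : d 1 ≤ d 0 := hmono 0 (by omega)
        have := ih'.2
        rw [if_neg (by omega)] at this
        linarith
    · rw [hsum, if_neg (by omega)]
      linarith [ih'.1]

lemma four_point {A B : ℝ} {f : ℝ → ℝ} (hf : ConvexOn ℝ (Set.Icc A B) f)
    {x y c : ℝ} (hx : x ∈ Set.Icc A B) (hyc : y + c ∈ Set.Icc A B)
    (hxy : x ≤ y) (hc : 0 ≤ c) : f (x + c) + f y ≤ f x + f (y + c) := by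
  rcases eq_or_lt_of_le hc with rfl | hc
  · simp
  rcases eq_or_lt_of_le hxy with rfl | hxy
  · simp [add_comm]
  set D := y - x + c with hD
  have hD0 : 0 < D := by simp [hD]; linarith
  have ha : (0:ℝ) ≤ (y - x) / D := div_nonneg (by linarith) hD0.le
  have hb : (0:ℝ) ≤ c / D := by positivity
  have hab : (y - x) / D + c / D = 1 := by field_simp; exact hD.symm
  have key1 := hf.2 hx hyc ha hb hab
  have key2 := hf.2 hx hyc hb ha (by linarith)
  have e1 : ((y - x) / D) • x + (c / D) • (y + c) = x + c := by
    simp only [smul_eq_mul]; field_simp; ring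
  have e2 : (c / D) • x + ((y - x) / D) • (y + c) = y := by
    simp only [smul_eq_mul]; field_simp; ring
  rw [e1] at key1
  rw [e2] at key2
  simp only [smul_eq_mul] at key1 key2
  have hsum : (y-x)/D * f x + c/D * f (y+c) + (c/D * f x + (y-x)/D * f (y+c))
      = f x + f (y+c) := by
    linear_combination (f x + f (y+c)) * hab
  linarith

lemma key_integral {T : ℝ} (hT : 0 < T) (f : ℝ → ℝ) (hcont : Continuous f)
    (hconv : ConvexOn ℝ (Set.Icc 0 T) f) (hant : AntitoneOn f (Set.Icc 0 T))
    (k : ℕ) (hk : 1 ≤ k) :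
    0 ≤ ∫ t in (0:ℝ)..T, f t * Real.cos (k * π * t / T) := by
  have hk0 : (0:ℝ) < k := by exact_mod_cast hk
  set L := T / k with hLdef
  have hL : 0 < L := div_pos hT hk0
  have hkL : (k:ℝ) * L = T := by rw [hLdef, mul_div_cancel₀ _ hk0.ne']
  -- continuity of cos part
  have hcos : Continuous fun s : ℝ => Real.cos ((k:ℝ) * π * s / T) := by
    exact Real.continuous_cos.comp ((continuous_const.mul continuous_id).div_const T)
  have hFc : Continuous fun t => f t * Real.cos ((k:ℝ) * π * t / T) :=
    hcont.mul hcos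
  -- cosine identities
  have ccos : ∀ (j : ℕ) (s : ℝ),
      Real.cos ((k:ℝ) * π * ((j:ℝ) * L + s) / T)
        = (-1:ℝ)^j * Real.cos ((k:ℝ) * π * s / T) := by
    intro j s
    have harg : (k:ℝ) * π * ((j:ℝ) * L + s) / T = (j:ℝ) * π - -((k:ℝ) * π * s / T) := by
      rw [hLdef]; field_simp; ring
    rw [harg, Real.cos_nat_mul_pi_sub, Real.cos_neg]
  have ccos2 : ∀ u : ℝ,
      Real.cos ((k:ℝ) * π * (L - u) / T) = -Real.cos ((k:ℝ) * π * u / T) := by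
    intro u
    have harg : (k:ℝ) * π * (L - u) / T = π - (k:ℝ) * π * u / T := by
      rw [hLdef]; field_simp
    rw [harg, Real.cos_pi_sub]
  -- the half-interval integrals
  set G : ℕ → ℝ := fun j => ∫ u in (0:ℝ)..(L/2),
      (f ((j:ℝ) * L + u) - f (((j:ℝ) + 1) * L - u)) * Real.cos ((k:ℝ) * π * u / T) with hGdef
  have hstep : ∀ j : ℕ,
      (∫ t in ((j:ℝ) * L)..(((j:ℝ) + 1) * L), f t * Real.cos ((k:ℝ) * π * t / T))
        = (-1:ℝ)^j * G j := by
    intro j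
    have h1 : (∫ s in (0:ℝ)..L, f ((j:ℝ) * L + s) * Real.cos ((k:ℝ) * π * ((j:ℝ) * L + s) / T))
        = ∫ t in ((j:ℝ) * L)..(((j:ℝ) + 1) * L), f t * Real.cos ((k:ℝ) * π * t / T) := by
      rw [intervalIntegral.integral_comp_add_left
        (fun t => f t * Real.cos ((k:ℝ) * π * t / T)) ((j:ℝ) * L)]
      rw [add_zero, show (j:ℝ) * L + L = ((j:ℝ) + 1) * L by ring]
    rw [← h1]
    have h2 : (∫ s in (0:ℝ)..L, f ((j:ℝ) * L + s) * Real.cos ((k:ℝ) * π * ((j:ℝ) * L + s) / T))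
        = (-1:ℝ)^j * ∫ s in (0:ℝ)..L, f ((j:ℝ) * L + s) * Real.cos ((k:ℝ) * π * s / T) := by
      rw [← intervalIntegral.integral_const_mul]
      apply intervalIntegral.integral_congr
      intro s _
      simp only [ccos]; ring
    rw [h2]
    congr 1
    -- now split [0, L] at L/2 and reflect
    have hg1 : Continuous fun s => f ((j:ℝ) * L + s) * Real.cos ((k:ℝ) * π * s / T) :=
      (hcont.comp (continuous_const.add continuous_id)).mul hcos
    have hg2 : Continuous fun s => f (((j:ℝ) + 1) * L - s) * Real.cos ((k:ℝ) * π * s / T) :=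
      (hcont.comp (continuous_const.sub continuous_id)).mul hcos
    have hsplit : (∫ s in (0:ℝ)..L, f ((j:ℝ) * L + s) * Real.cos ((k:ℝ) * π * s / T))
        = (∫ s in (0:ℝ)..(L/2), f ((j:ℝ) * L + s) * Real.cos ((k:ℝ) * π * s / T))
          + ∫ s in (L/2)..L, f ((j:ℝ) * L + s) * Real.cos ((k:ℝ) * π * s / T) := by
      rw [intervalIntegral.integral_add_adjacent_intervals
        (hg1.intervalIntegrable _ _) (hg1.intervalIntegrable _ _)]
    have hrefl : (∫ s in (L/2)..L, f ((j:ℝ) * L + s) * Real.cos ((k:ℝ) * π * s / T))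
        = - ∫ u in (0:ℝ)..(L/2), f (((j:ℝ) + 1) * L - u) * Real.cos ((k:ℝ) * π * u / T) := by
      have h3 := intervalIntegral.integral_comp_sub_left
        (fun s => f ((j:ℝ) * L + s) * Real.cos ((k:ℝ) * π * s / T)) L (a := 0) (b := L/2)
      rw [sub_zero, show L - L/2 = L/2 by ring] at h3
      rw [← h3]
      rw [← intervalIntegral.integral_neg]
      apply intervalIntegral.integral_congr
      intro u _
      simp only [ccos2, show ∀ u:ℝ, (j:ℝ) * L + (L - u) = ((j:ℝ) + 1) * L - u from fun u => by ring]
      ring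
    rw [hsplit, hrefl, ← sub_eq_add_neg,
      ← intervalIntegral.integral_sub (hg1.intervalIntegrable _ _) (hg2.intervalIntegrable _ _)]
    simp only [hGdef]
    apply intervalIntegral.integral_congr
    intro u _
    ring
  -- sum over subintervals
  have htotal : (∫ t in (0:ℝ)..T, f t * Real.cos ((k:ℝ) * π * t / T))
      = ∑ j ∈ range k, (-1:ℝ)^j * G j := by
    have hadj := intervalIntegral.sum_integral_adjacent_intervals
      (a := fun j : ℕ => (j:ℝ) * L) (n := k) (μ := volume)
      (f := fun t => f t * Real.cos ((k:ℝ) * π * t / T))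
      (fun j _ => hFc.intervalIntegrable _ _)
    simp only [Nat.cast_zero, zero_mul, hkL] at hadj
    rw [← hadj]
    apply Finset.sum_congr rfl
    intro j _
    rw [← hstep j]
    push_cast
    ring_nf
  rw [htotal]
  -- rewrite sum of integrals as a single integral
  have hsum2 : ∑ j ∈ range k, (-1:ℝ)^j * G j
      = ∫ u in (0:ℝ)..(L/2),
          (∑ j ∈ range k, (-1:ℝ)^j * (f ((j:ℝ) * L + u) - f (((j:ℝ) + 1) * L - u)))
            * Real.cos ((k:ℝ) * π * u / T) := by
    have : ∀ j ∈ range k, (-1:ℝ)^j * G j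
        = ∫ u in (0:ℝ)..(L/2),
            (-1:ℝ)^j * ((f ((j:ℝ) * L + u) - f (((j:ℝ) + 1) * L - u))
              * Real.cos ((k:ℝ) * π * u / T)) := by
      intro j _
      rw [hGdef, ← intervalIntegral.integral_const_mul]
    rw [Finset.sum_congr rfl this]
    rw [← intervalIntegral.integral_finset_sum]
    · apply intervalIntegral.integral_congr
      intro u _
      simp only [Finset.sum_mul, mul_assoc]
    · intro j _
      apply Continuous.intervalIntegrable
      exact continuous_const.mul
        (((hcont.comp (continuous_const.add continuous_id)).sub
          (hcont.comp (continuous_const.sub continuous_id))).mul hcos)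
  rw [hsum2]
  -- now pointwise nonnegativity
  apply intervalIntegral.integral_nonneg (by linarith : (0:ℝ) ≤ L/2)
  intro u hu
  obtain ⟨hu0, huL⟩ := hu
  apply mul_nonneg
  · -- alternating sum nonneg
    refine (alt_sum_aux k (fun j => f ((j:ℝ) * L + u) - f (((j:ℝ) + 1) * L - u)) ?_ ?_).1
    · intro j hj
      have hjk : (j:ℝ) + 2 ≤ (k:ℝ) := by exact_mod_cast (by omega : j + 2 ≤ k)
      have hx : (j:ℝ) * L + u ∈ Set.Icc 0 T := by
        constructor
        · positivity
        · rw [← hkL]; nlinarith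
      have hyc : (((j:ℝ) + 1) * L - u) + L ∈ Set.Icc 0 T := by
        constructor
        · nlinarith
        · rw [← hkL]; nlinarith
      have h4 := four_point hconv hx hyc (by nlinarith) hL.le
      push_cast
      have e1 : ((j:ℝ) + 1) * L + u = ((j:ℝ) * L + u) + L := by ring
      have e2 : ((j:ℝ) + 1 + 1) * L - u = (((j:ℝ) + 1) * L - u) + L := by ring
      rw [e1, e2]
      linarith
    · intro j hj
      have hjk : (j:ℝ) + 1 ≤ (k:ℝ) := by exact_mod_cast (by omega : j + 1 ≤ k)
      have hx : (j:ℝ) * L + u ∈ Set.Icc 0 T := by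
        constructor
        · positivity
        · rw [← hkL]; nlinarith
      have hy : ((j:ℝ) + 1) * L - u ∈ Set.Icc 0 T := by
        constructor
        · nlinarith
        · rw [← hkL]; nlinarith
      exact sub_nonneg.mpr (hant hx hy (by nlinarith))
  · -- cosine nonneg
    apply Real.cos_nonneg_of_mem_Icc
    constructor
    · have : 0 ≤ (k:ℝ) * π * u / T := by positivity
      linarith [Real.pi_pos]
    · rw [div_le_iff₀ hT, ← hkL]
      nlinarith [Real.pi_pos, mul_le_mul_of_nonneg_left huL (by positivity : (0:ℝ) ≤ (k:ℝ) * π)]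

/-- for `T > 0` and `H ∈ (0, 1/2)`, the Fourier cosine coefficients of the
fractional Ornstein-Uhlenbeck covariance `t ↦ e^{−t^{2H}}` are nonnegative:
`∫₀ᵀ e^{−t^{2H}} cos(kπt/T) dt ≥ 0` for every `k ≥ 1`. -/
theorem fou_fourier_coefficients_nonneg
    (T H : ℝ) (hT : 0 < T) (hH : H ∈ Set.Ioo (0 : ℝ) (1 / 2)) :
    ∀ k : ℕ, 1 ≤ k →
      0 ≤ ∫ t in (0 : ℝ)..T, Real.exp (-(t ^ (2 * H))) * Real.cos (k * π * t / T) := by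
  obtain ⟨hH0, hH1⟩ := hH
  intro k hk
  have h2H0 : 0 < 2 * H := by linarith
  have h2H1 : 2 * H ≤ 1 := by linarith
  set f : ℝ → ℝ := fun t => Real.exp (-(t ^ (2 * H))) with hf
  have hcont : Continuous f :=
    Real.continuous_exp.comp (Real.continuous_rpow_const h2H0.le).neg
  have hinner : ConvexOn ℝ (Set.Icc 0 T) (fun t : ℝ => -(t ^ (2 * H))) := by
    exact ((Real.concaveOn_rpow h2H0.le h2H1).subset
      (Set.Icc_subset_Ici_self) (convex_Icc 0 T)).neg
  have hconv : ConvexOn ℝ (Set.Icc 0 T) f := by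
    refine ⟨convex_Icc _ _, fun x hx y hy a b ha hb hab => ?_⟩
    have h1 : -((a • x + b • y) ^ (2 * H)) ≤ a • (-(x ^ (2 * H))) + b • (-(y ^ (2 * H))) :=
      hinner.2 hx hy ha hb hab
    calc f (a • x + b • y) ≤ Real.exp (a • (-(x ^ (2 * H))) + b • (-(y ^ (2 * H)))) :=
          Real.exp_le_exp.mpr h1
      _ ≤ a • Real.exp (-(x ^ (2 * H))) + b • Real.exp (-(y ^ (2 * H))) :=
          convexOn_exp.2 (Set.mem_univ _) (Set.mem_univ _) ha hb hab
  have hant : AntitoneOn f (Set.Icc 0 T) := by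
    intro x hx y hy hxy
    exact Real.exp_le_exp.mpr (neg_le_neg (Real.rpow_le_rpow hx.1 hxy h2H0.le))
  exact key_integral hT f hcont hconv hant k hk
end
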